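/- Let K ⊆ ℝ^N be nonempty, closed, convex, and such that β + 𝟙 ∈ K and β − 𝟙 ∈ K whenever β ∈ K. If β* ∈ K solves the variational inequality (β − β*)ᵀF(β*) ≥ 0 for all β ∈ K, then Σ_{n=1}^{N} ( C'_n(x*_n) + x*_n/(α(N−1)) − λ(β*) ) = 0, where x* = x(β*). -/
import Mathlib


/-- Let `K ⊆ ℝ^N` be nonempty, closed, convex, and invariant under shifts by
`±𝟙`. If `β* ∈ K` solves the variational inequality `(β − β*)ᵀF(β*) ≥ 0` for all `β ∈ K`,
then `Σ_n ( C'_n(x*_n) + x*_n/(α(N−1)) − λ(β*) ) = 0`, where `x* = x(β*)`. -/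
theorem vGNE_sum_stationarity
    (N : ℕ) (hN : 2 ≤ N) (α κ xtot : ℝ) (hα : 0 < α) (hκ : 0 < κ)
    (C : Fin N → ℝ → ℝ)
    (hC2 : ∀ n, ContDiff ℝ 2 (C n))
    (hCconv : ∀ n, ConvexOn ℝ Set.univ (C n))
    (hClip : ∀ n, ∀ y y' : ℝ, |deriv (C n) y' - deriv (C n) y| ≤ κ * |y' - y|)
    (x : (Fin N → ℝ) → Fin N → ℝ)
    (hx : ∀ β n, x β n = (xtot - ∑ m, β m) / (N : ℝ) + β n)
    (lam : (Fin N → ℝ) → ℝ)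
    (hlam : ∀ β, lam β = (xtot - ∑ m, β m) / (α * (N : ℝ)))
    (F : (Fin N → ℝ) → Fin N → ℝ)
    (hF : ∀ β n, F β n =
      (((N : ℝ) - 1) / (N : ℝ)) * deriv (C n) (x β n)
        + (((∑ m, β m) - xtot) * ((N : ℝ) - 2) + (N : ℝ) * β n) / (α * (N : ℝ) ^ 2))
    (K : Set (Fin N → ℝ)) (hKne : K.Nonempty) (hKcl : IsClosed K) (hKconv : Convex ℝ K)
    (hshift : ∀ β ∈ K, (fun n => β n + 1) ∈ K ∧ (fun n => β n - 1) ∈ K)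
    (βs : Fin N → ℝ) (hβsK : βs ∈ K)
    (hVI : ∀ β ∈ K, 0 ≤ ∑ n, (β n - βs n) * F βs n) :
    ∑ n, (deriv (C n) (x βs n) + x βs n / (α * ((N : ℝ) - 1)) - lam βs) = 0 := by
  have hNR : (2:ℝ) ≤ (N:ℝ) := by exact_mod_cast hN
  have hN0 : (N:ℝ) ≠ 0 := by linarith
  have hN1 : (N:ℝ) - 1 ≠ 0 := by linarith
  have hα0 : α ≠ 0 := ne_of_gt hα
  have key : ∀ n, F βs n
      = (((N:ℝ) - 1) / N) *
        (deriv (C n) (x βs n) + x βs n / (α * ((N : ℝ) - 1)) - lam βs) := by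
    intro n
    rw [hF, hx, hlam]
    field_simp
    ring
  have hsum : ∑ n, F βs n
      = (((N:ℝ) - 1) / N) *
        ∑ n, (deriv (C n) (x βs n) + x βs n / (α * ((N : ℝ) - 1)) - lam βs) := by
    rw [Finset.mul_sum]; exact Finset.sum_congr rfl fun n _ => key n
  have h1 := hVI _ (hshift βs hβsK).1
  have h2 := hVI _ (hshift βs hβsK).2
  simp only [add_sub_cancel_left, one_mul, sub_sub_cancel_left] at h1 h2
  have hz : ∑ n, F βs n = 0 := by
    have h2' : ∑ n, (-1 : ℝ) * F βs n = -∑ n, F βs n := by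
      rw [← Finset.sum_neg_distrib]
      exact Finset.sum_congr rfl fun n _ => by ring
    rw [h2'] at h2
    linarith
  rw [hsum] at hz
  have hc : (((N:ℝ) - 1) / N) ≠ 0 := div_ne_zero hN1 hN0
  exact (mul_eq_zero.mp hz).resolve_left hc
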